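/- Let ℜ ⊆ F(𝒜) and let f ∈ S_1 be a linear form. Then the following are equivalent: (i) f ∈ K·ℜ; (ii) ι(f) ∈ J(ℜ) : x_[n]; (iii) ι(f) ∈ √(J(ℜ)) : x_[n]. -/

import Mathlib

open MvPolynomial

noncomputable section

variable {K : Type*} [Field K] {n : ℕ}

open Classical in
/-- The support `supp(a) = {i : aᵢ ≠ 0}` of the linear form `∑ᵢ aᵢ xᵢ ∈ S₁`,
where linear forms of `S = K[x₁,…,xₙ]` are identified with their coefficient
vectors `a : Fin n → K`. -/
def lsupp (a : Fin n → K) : Finset (Fin n) :=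
  Finset.univ.filter (fun i => a i ≠ 0)

/-- `ι(r) = ∑_{i ∈ supp r} aᵢ · x_{supp(r) ∖ {i}}` for the linear form `r = ∑ᵢ aᵢ xᵢ`. -/
def iotaL (a : Fin n → K) : MvPolynomial (Fin n) K :=
  ∑ i ∈ lsupp a, C (a i) * ∏ j ∈ (lsupp a).erase i, X j

/-- `x_[n] = x₁⋯xₙ`. -/
def xAll (n : ℕ) (K : Type*) [Field K] : MvPolynomial (Fin n) K := ∏ i, X i

/-- `a : Fin n → K` (identified with the linear form `∑ᵢ aᵢ xᵢ ∈ S₁`) is a relation of the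
central arrangement whose hyperplanes are the kernels of the linear forms `α i`, i.e. it lies
in the kernel of the map `S₁ → V*`, `xᵢ ↦ αᵢ`. -/
def IsRel {V : Type*} [AddCommGroup V] [Module K V]
    (α : Fin n → Module.Dual K V) (a : Fin n → K) : Prop :=
  ∑ i, a i • α i = 0

/-- `J(ℜ) = (ι(r) : r ∈ ℜ)`. -/
def Jid (R : Set (Fin n → K)) : Ideal (MvPolynomial (Fin n) K) :=
  Ideal.span (iotaL '' R)

/-- `I(ℜ) = (ι(r) : r ∈ K·ℜ)`. -/
def Iid (R : Set (Fin n → K)) : Ideal (MvPolynomial (Fin n) K) :=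
  Ideal.span (iotaL '' (Submodule.span K R : Set (Fin n → K)))

/-- The Orlik–Terao ideal `I(𝒜) = (ι(r) : r ∈ F(𝒜))`. -/
def OTid {V : Type*} [AddCommGroup V] [Module K V]
    (α : Fin n → Module.Dual K V) : Ideal (MvPolynomial (Fin n) K) :=
  Ideal.span (iotaL '' {a | IsRel α a})

/-- The codimension (height) of an ideal `I`: the infimum of the heights, in the prime
spectrum, of the prime ideals containing `I`. -/
def codim {R : Type*} [CommRing R] (I : Ideal R) : ℕ∞ :=
  ⨅ p ∈ {p : PrimeSpectrum R | I ≤ p.asIdeal}, Order.height p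

section Aux

open Classical in
lemma mem_lsupp {a : Fin n → K} {i : Fin n} : i ∈ lsupp a ↔ a i ≠ 0 := by
  simp [lsupp]

/-- `δ(a) = ∑ᵢ aᵢ · x_{[n]∖{i}}`. -/
def deltaL (a : Fin n → K) : MvPolynomial (Fin n) K :=
  ∑ i, C (a i) * ∏ j ∈ Finset.univ.erase i, X j

lemma iotaL_mul_compl (a : Fin n → K) :
    iotaL a * ∏ j ∈ (lsupp a)ᶜ, X j = deltaL a := by
  unfold iotaL deltaL
  calc (∑ i ∈ lsupp a, C (a i) * ∏ j ∈ (lsupp a).erase i, X j) * ∏ j ∈ (lsupp a)ᶜ, X j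
      = ∑ i ∈ lsupp a, C (a i) * ∏ j ∈ Finset.univ.erase i, X j := by
        rw [Finset.sum_mul]
        refine Finset.sum_congr rfl fun i hi => ?_
        have hset : (lsupp a).erase i ∪ (lsupp a)ᶜ = Finset.univ.erase i := by
          ext j
          have hi' : a i ≠ 0 := mem_lsupp.mp hi
          simp only [Finset.mem_union, Finset.mem_erase, Finset.mem_compl, Finset.mem_univ,
            and_true, mem_lsupp]
          by_cases hj : a j = 0 <;> by_cases hji : j = i <;> simp_all
        rw [mul_assoc, ← Finset.prod_union
          (disjoint_compl_right.mono_left (Finset.erase_subset _ _)), hset]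
    _ = ∑ i, C (a i) * ∏ j ∈ Finset.univ.erase i, X j := by
        refine Finset.sum_subset (Finset.subset_univ _) fun i _ hi => ?_
        have : a i = 0 := not_not.mp (mem_lsupp.not.mp hi)
        simp [this]

lemma iotaL_mul_xAll (a : Fin n → K) :
    iotaL a * xAll n K = deltaL a * ∏ j ∈ lsupp a, X j := by
  rw [xAll, ← Finset.prod_mul_prod_compl (lsupp a) X,
    show iotaL a * ((∏ j ∈ lsupp a, X j) * ∏ j ∈ (lsupp a)ᶜ, X j)
      = (iotaL a * ∏ j ∈ (lsupp a)ᶜ, X j) * ∏ j ∈ lsupp a, X j from by ring,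
    iotaL_mul_compl]

lemma deltaL_mem (R : Set (Fin n → K)) {a : Fin n → K}
    (ha : a ∈ Submodule.span K R) : deltaL a ∈ Jid R := by
  induction ha using Submodule.span_induction with
  | mem r hr =>
      rw [← iotaL_mul_compl]
      exact Ideal.mul_mem_right _ _ (Ideal.subset_span ⟨r, hr, rfl⟩)
  | zero => have : deltaL (0 : Fin n → K) = 0 := by simp [deltaL]
            rw [this]; exact zero_mem _
  | add x y hx hy ihx ihy =>
      have : deltaL (x + y) = deltaL x + deltaL y := by
        simp [deltaL, map_add, add_mul, Finset.sum_add_distrib]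
      rw [this]; exact add_mem ihx ihy
  | smul c x hx ih =>
      have : deltaL (c • x) = C c * deltaL x := by
        simp [deltaL, Finset.mul_sum, Pi.smul_apply, smul_eq_mul, map_mul, mul_assoc]
      rw [this]; exact Ideal.mul_mem_left _ _ ih

lemma iotaL_mul_xAll_mem (R : Set (Fin n → K)) {a : Fin n → K}
    (ha : a ∈ Submodule.span K R) : iotaL a * xAll n K ∈ Jid R := by
  rw [iotaL_mul_xAll]
  exact Ideal.mul_mem_right _ _ (deltaL_mem R ha)

lemma mem_span_of_iota_mul_xAll_mem_radical (R : Set (Fin n → K))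
    (hW : ∀ i : Fin n, Pi.single i 1 ∉ Submodule.span K R) {a : Fin n → K}
    (h : iotaL a * xAll n K ∈ (Jid R).radical) : a ∈ Submodule.span K R := by
  by_contra ha
  set W := Submodule.span K R with hWdef
  set Q := ((Fin n → K) ⧸ W) with hQ
  set m := Module.finrank K Q with hm
  let b : Module.Basis (Fin m) K Q := Module.finBasis K Q
  set A := MvPolynomial (Fin m) K with hA
  let lin : Q →ₗ[K] A :=
    { toFun := fun v => ∑ j, C (b.repr v j) * X j
      map_add' := fun u v => by
        simp [map_add, add_mul, Finset.sum_add_distrib]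
      map_smul' := fun c v => by
        simp only [map_smul, Finsupp.smul_apply, smul_eq_mul, RingHom.id_apply,
          Finset.smul_sum]
        refine Finset.sum_congr rfl fun x _ => ?_
        rw [MvPolynomial.smul_eq_C_mul, map_mul, mul_assoc] }
  have hcoeff : ∀ (c : Fin m → K) (j : Fin m),
      MvPolynomial.coeff (Finsupp.single j 1) (∑ k, C (c k) * X k) = c j := by
    intro c j
    rw [MvPolynomial.coeff_sum, Finset.sum_eq_single j]
    · simp [MvPolynomial.coeff_C_mul, MvPolynomial.coeff_X']
    · intro k _ hk
      simp [MvPolynomial.coeff_C_mul, MvPolynomial.coeff_X',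
        Finsupp.single_left_inj (one_ne_zero (α := ℕ)), hk]
    · simp
  have hlin0 : ∀ v : Q, lin v = 0 → v = 0 := by
    intro v hv
    have hv' : (∑ j, C (b.repr v j) * X j : A) = 0 := hv
    have hrep : ∀ j, b.repr v j = 0 := by
      intro j
      have := congrArg (MvPolynomial.coeff (Finsupp.single j 1)) hv'
      simpa [hcoeff] using this
    have : b.repr v = 0 := Finsupp.ext hrep
    exact b.repr.map_eq_zero_iff.mp this
  let Lm : (Fin n → K) →ₗ[K] A := lin.comp W.mkQ
  let β : Fin n → A := fun i => Lm (Pi.single i 1)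
  have hLm : ∀ v : Fin n → K, ∑ i, C (v i) * β i = Lm v := by
    intro v
    calc ∑ i, C (v i) * β i = ∑ i, Lm (v i • (Pi.single i 1 : Fin n → K)) := by
          refine Finset.sum_congr rfl fun i _ => ?_
          rw [map_smul, MvPolynomial.smul_eq_C_mul]
      _ = Lm v := by
          rw [← map_sum]
          congr 1
          simp only [← Pi.single_smul, smul_eq_mul, mul_one, Finset.univ_sum_single]
  have hβ : ∀ i, β i ≠ 0 := by
    intro i hi
    apply hW i
    have h0 : W.mkQ (Pi.single i 1) = 0 := hlin0 _ hi
    rwa [Submodule.mkQ_apply, Submodule.Quotient.mk_eq_zero] at h0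
  let F := FractionRing A
  have hinj := IsFractionRing.injective A F
  have hβalg : ∀ i, algebraMap A F (β i) ≠ 0 := by
    intro i h0
    exact hβ i (hinj (h0.trans (map_zero (algebraMap A F)).symm))
  let φ : MvPolynomial (Fin n) K →+* F :=
    MvPolynomial.eval₂Hom ((algebraMap A F).comp (C : K →+* A))
      (fun i => (algebraMap A F (β i))⁻¹)
  have hφX : ∀ i, φ (X i) = (algebraMap A F (β i))⁻¹ := fun i =>
    MvPolynomial.eval₂_X _ _ _
  have hφC : ∀ x : K, φ (C x) = algebraMap A F (C x) := fun x =>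
    MvPolynomial.eval₂_C _ _ _
  have key : ∀ v : Fin n → K,
      φ (iotaL v) * ∏ j ∈ lsupp v, algebraMap A F (β j) = algebraMap A F (Lm v) := by
    intro v
    have step1 : φ (iotaL v) * ∏ j ∈ lsupp v, algebraMap A F (β j)
        = ∑ i ∈ lsupp v, algebraMap A F (C (v i) * β i) := by
      unfold iotaL
      rw [map_sum, Finset.sum_mul]
      refine Finset.sum_congr rfl fun i hi => ?_
      have hne : (∏ j ∈ (lsupp v).erase i, algebraMap A F (β j)) ≠ 0 :=
        Finset.prod_ne_zero_iff.2 fun j _ => hβalg j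
      simp only [map_mul, map_prod, hφC, hφX]
      rw [Finset.prod_inv_distrib,
        ← Finset.mul_prod_erase (lsupp v) (fun j => algebraMap A F (β j)) hi]
      linear_combination (algebraMap A F (C (v i)) * algebraMap A F (β i)) * inv_mul_cancel₀ hne
    have step2 : ∑ i ∈ lsupp v, algebraMap A F (C (v i) * β i)
        = ∑ i, algebraMap A F (C (v i) * β i) := by
      refine Finset.sum_subset (Finset.subset_univ _) fun i _ hi => ?_
      have h0 : v i = 0 := not_not.mp (mem_lsupp.not.mp hi)
      simp [h0]
    rw [step1, step2, ← map_sum, hLm v]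
  have hgen : ∀ r ∈ R, φ (iotaL r) = 0 := by
    intro r hr
    have h0 : Lm r = 0 := by
      have hq : W.mkQ r = 0 := by
        rw [Submodule.mkQ_apply, Submodule.Quotient.mk_eq_zero]
        exact Submodule.subset_span hr
      show lin (W.mkQ r) = 0
      rw [hq, map_zero]
    have hk := key r
    rw [h0, map_zero] at hk
    have hne : (∏ j ∈ lsupp r, algebraMap A F (β j)) ≠ 0 :=
      Finset.prod_ne_zero_iff.2 fun j _ => hβalg j
    exact (mul_eq_zero.mp hk).resolve_right hne
  have hJ : Jid R ≤ RingHom.ker φ := Ideal.span_le.2 (by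
    rintro _ ⟨r, hr, rfl⟩
    exact hgen r hr)
  obtain ⟨k, hk⟩ := Ideal.mem_radical_iff.mp h
  have hφ0 : φ (iotaL a * xAll n K) = 0 := by
    rcases Nat.eq_zero_or_pos k with hk0 | hkpos
    · subst hk0
      rw [pow_zero] at hk
      have htop : Jid R = ⊤ := Ideal.eq_top_iff_one _ |>.2 hk
      exact hJ (htop ▸ Submodule.mem_top)
    · have hp : φ (iotaL a * xAll n K) ^ k = 0 := by
        rw [← map_pow]; exact hJ hk
      exact (pow_eq_zero_iff (Nat.pos_iff_ne_zero.mp hkpos)).mp hp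
  have hxAll : φ (xAll n K) ≠ 0 := by
    rw [xAll, map_prod]
    refine Finset.prod_ne_zero_iff.2 fun i _ => ?_
    rw [hφX i]
    exact inv_ne_zero (hβalg i)
  have hιa : φ (iotaL a) = 0 := by
    rw [map_mul] at hφ0
    exact (mul_eq_zero.mp hφ0).resolve_right hxAll
  have hLa : algebraMap A F (Lm a) = 0 := by
    rw [← key a, hιa, zero_mul]
  have hLa0 : Lm a = 0 := hinj (hLa.trans (map_zero (algebraMap A F)).symm)
  have hq0 : W.mkQ a = 0 := hlin0 _ hLa0
  rw [Submodule.mkQ_apply, Submodule.Quotient.mk_eq_zero] at hq0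
  exact ha hq0

end Aux

/-- Lemma 3.2, second part: for `ℜ ⊆ F(𝒜)` and a linear form `f = ∑ᵢ aᵢ xᵢ ∈ S₁`, the
following are equivalent: (i) `f ∈ K·ℜ`; (ii) `ι(f) ∈ J(ℜ) : x_[n]`;
(iii) `ι(f) ∈ √(J(ℜ)) : x_[n]`. -/
theorem linear_form_mem_span_iff_iota_mem_colon
    {V : Type*} [AddCommGroup V] [Module K V] [FiniteDimensional K V]
    (α : Fin n → Module.Dual K V) (hne : ∀ i, α i ≠ 0)
    (hdist : ∀ i j, i ≠ j → LinearMap.ker (α i) ≠ LinearMap.ker (α j))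
    (R : Set (Fin n → K)) (hR : ∀ r ∈ R, IsRel α r) (a : Fin n → K) :
    (a ∈ Submodule.span K R ↔ iotaL a ∈ (Jid R).colon (Ideal.span {xAll n K})) ∧
    (a ∈ Submodule.span K R ↔
      iotaL a ∈ ((Jid R).radical).colon (Ideal.span {xAll n K})) := by
  have hsingle : ∀ i : Fin n, Pi.single i 1 ∉ Submodule.span K R := by
    intro i hi
    apply hne i
    let ρ : (Fin n → K) →ₗ[K] Module.Dual K V :=
      { toFun := fun v => ∑ j, v j • α j
        map_add' := fun u v => by simp [add_smul, Finset.sum_add_distrib]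
        map_smul' := fun c v => by simp [Finset.smul_sum, mul_smul] }
    have hker : Submodule.span K R ≤ LinearMap.ker ρ :=
      Submodule.span_le.2 fun r hr => by
        simpa [ρ, LinearMap.mem_ker, IsRel] using hR r hr
    have h0 : ρ (Pi.single i 1) = 0 := hker hi
    have : ρ (Pi.single i 1) = α i := by
      show (∑ j, (Pi.single i 1 : Fin n → K) j • α j) = α i
      rw [Finset.sum_eq_single i]
      · simp
      · intro j _ hj
        simp [Pi.single_apply, hj]
      · simp
    rwa [this] at h0
  have fwd : a ∈ Submodule.span K R → iotaL a ∈ (Jid R).colon (Ideal.span {xAll n K}) := by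
    intro ha
    rw [Ideal.mem_colon_span_singleton]
    exact iotaL_mul_xAll_mem R ha
  have mono : iotaL a ∈ (Jid R).colon (Ideal.span {xAll n K}) →
      iotaL a ∈ ((Jid R).radical).colon (Ideal.span {xAll n K}) := by
    intro hcol
    rw [Ideal.mem_colon_span_singleton] at hcol ⊢
    exact Ideal.le_radical hcol
  have bwd : iotaL a ∈ ((Jid R).radical).colon (Ideal.span {xAll n K}) →
      a ∈ Submodule.span K R := by
    intro hcol
    rw [Ideal.mem_colon_span_singleton] at hcol
    exact mem_span_of_iota_mul_xAll_mem_radical R hsingle hcol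
  exact ⟨⟨fwd, fun h => bwd (mono h)⟩, ⟨fun h => mono (fwd h), bwd⟩⟩


end
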